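/- arXiv:math/0310410 — 4 statements merged into one kernel-verified Lean document; each statement's English description precedes it below -/
import Mathlib

section
/- Let R be a commutative ring, (u_i) elements with u_i − u_j invertible for i ≠ j, (r_{ij}) symmetric, v_{ij} := (u_j − u_i) r_{ij}, and θ_{ij} := (u_j − u_i)^{-1}(r_{ij} + Σ_k r_{ik} v_{jk}) for i ≠ j. Then for every integer m ≥ 0 and all i ≠ j: u_i^{m+1} θ_{ij} + u_j^{m+1} θ_{ji} = − r_{ij} Σ_{p=0}^{m} u_i^p u_j^{m−p} − Σ_k r_{ik} r_{jk} ( u_j^{m+1} + (u_k − u_j) Σ_{p=0}^{m} u_i^p u_j^{m−p} ). -/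
/-- First order poles do not appear: the combination
`u_i^{m+1} θ_{ij} + u_j^{m+1} θ_{ji}` is polynomial in the rotation coefficients. -/
theorem stmt5 {R : Type*} [CommRing R] {N : ℕ}
    (u : Fin N → R) (hinv : ∀ i j, i ≠ j → IsUnit (u i - u j))
    (r : Fin N → Fin N → R) (hr : ∀ i j, r i j = r j i)
    (v : Fin N → Fin N → R) (hv : ∀ i j, v i j = (u j - u i) * r i j)
    (θ : Fin N → Fin N → R)
    (hθ : ∀ i j, i ≠ j → (u j - u i) * θ i j = r i j + ∑ k, r i k * v j k) :
    ∀ (m : ℕ) (i j : Fin N), i ≠ j →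
      u i ^ (m + 1) * θ i j + u j ^ (m + 1) * θ j i
        = -(r i j * ∑ p ∈ Finset.range (m + 1), u i ^ p * u j ^ (m - p))
          - ∑ k, r i k * r j k *
              (u j ^ (m + 1) + (u k - u j) * ∑ p ∈ Finset.range (m + 1), u i ^ p * u j ^ (m - p)) := by
  intro m i j hij
  have hji := hij.symm
  have hui : IsUnit (u j - u i) := hinv j i hji
  have h1 := hθ i j hij
  have h2 := hθ j i hji
  set S : R := ∑ p ∈ Finset.range (m + 1), u i ^ p * u j ^ (m - p) with hS
  have hC : (∑ k, r i k * v j k) - (∑ k, r j k * v i k)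
      = -((u j - u i) * ∑ k, r i k * r j k) := by
    rw [Finset.mul_sum, ← Finset.sum_sub_distrib, ← Finset.sum_neg_distrib]
    refine Finset.sum_congr rfl fun k _ => ?_
    rw [hv, hv]; ring
  have hsum : θ i j + θ j i = -∑ k, r i k * r j k := by
    refine hui.mul_left_cancel ?_
    linear_combination h1 - h2 + hC + hr i j
  have hgeom : u i ^ (m + 1) - u j ^ (m + 1) = (u i - u j) * S := by
    rw [hS]
    have := geom_sum₂_mul (u i) (u j) (m + 1)
    simp only [Nat.add_sub_cancel] at this
    rw [← this]; ring
  have hRS : ∑ k, r i k * r j k * (u j ^ (m + 1) + (u k - u j) * S)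
      = u j ^ (m + 1) * (∑ k, r i k * r j k) + S * (∑ k, r i k * v j k) := by
    rw [Finset.mul_sum, Finset.mul_sum, ← Finset.sum_add_distrib]
    refine Finset.sum_congr rfl fun k _ => ?_
    rw [hv]; ring
  rw [hRS]
  linear_combination u j ^ (m + 1) * hsum - S * h1 + θ i j * hgeom
end

section
/- Let R be a commutative ring, D: R → R a derivation, and let u_1, ..., u_N, r_{ij} ∈ R with r symmetric, satisfying D u_i = − u_i^2 for all i, and D r_{ij} = (15/4) δ_{ij} + (u_i + u_j) r_{ij} − Σ_k v_{ik} v_{jk} for all i, j, where v_{ij} := (u_j − u_i) r_{ij}. Then for all i ≠ j: D v_{ij} = (u_i − u_j) Σ_k v_{ik} v_{jk}. -/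
/-- Action of the Virasoro vector field `L₁` on `v_{ij}`. -/
theorem stmt8 {R : Type*} [CommRing R] [Algebra ℚ R] {N : ℕ}
    (D : Derivation ℚ R R)
    (u : Fin N → R) (r : Fin N → Fin N → R) (hr : ∀ i j, r i j = r j i)
    (v : Fin N → Fin N → R) (hv : ∀ i j, v i j = (u j - u i) * r i j)
    (hDu : ∀ i, D (u i) = -(u i ^ 2))
    (hDr : ∀ i j, D (r i j) =
      (if i = j then algebraMap ℚ R (15 / 4) else 0)
        + (u i + u j) * r i j - ∑ k, v i k * v j k) :
    ∀ i j, i ≠ j → D (v i j) = (u i - u j) * ∑ k, v i k * v j k := by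
  intro i j hij
  rw [hv i j, Derivation.leibniz, map_sub, hDu, hDu, hDr i j, if_neg hij]
  simp only [smul_eq_mul]
  ring
end

section
/- Let R be a commutative ℚ-algebra, D: R → R a derivation, u_i ∈ R with u_i − u_j invertible for i ≠ j, r_{ij} symmetric, v_{ij} := (u_j − u_i) r_{ij}, θ_{ij} := (u_j − u_i)^{-1}(r_{ij} + Σ_k r_{ik} v_{jk}) for i ≠ j. Assume D u_i = − u_i^2 and D r_{ij} = (15/4) δ_{ij} + (u_i + u_j) r_{ij} − Σ_k v_{ik} v_{jk}. Then for all i ≠ j: D θ_{ij} = (3 u_i + u_j) θ_{ij} − (11/4) r_{ij} + Σ_{k,l} r_{ik} v_{jl} v_{kl}. -/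
/-- Action of the Virasoro vector field `L₁` on `θ_{ij}`. -/
theorem stmt9 {R : Type*} [CommRing R] [Algebra ℚ R] {N : ℕ}
    (D : Derivation ℚ R R)
    (u : Fin N → R) (hinv : ∀ i j, i ≠ j → IsUnit (u i - u j))
    (r : Fin N → Fin N → R) (hr : ∀ i j, r i j = r j i)
    (v : Fin N → Fin N → R) (hv : ∀ i j, v i j = (u j - u i) * r i j)
    (θ : Fin N → Fin N → R)
    (hθ : ∀ i j, i ≠ j → (u j - u i) * θ i j = r i j + ∑ k, r i k * v j k)
    (hDu : ∀ i, D (u i) = -(u i ^ 2))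
    (hDr : ∀ i j, D (r i j) =
      (if i = j then algebraMap ℚ R (15 / 4) else 0)
        + (u i + u j) * r i j - ∑ k, v i k * v j k) :
    ∀ i j, i ≠ j → D (θ i j) =
      (3 * u i + u j) * θ i j - algebraMap ℚ R (11 / 4) * r i j
        + ∑ k, ∑ l, r i k * v j l * v k l := by
  intro i j hij
  have hS : IsUnit (u j - u i) := hinv j i hij.symm
  have hva : ∀ a b : Fin N, v a b = - v b a := by
    intro a b; rw [hv, hv, hr]; ring
  have hDv : ∀ a b : Fin N, D (v a b) = (u a - u b) * ∑ l, v a l * v b l := by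
    intro a b
    rw [hv a b, D.leibniz, smul_eq_mul, smul_eq_mul, hDr, map_sub, hDu, hDu]
    rcases eq_or_ne a b with h | h
    · subst h; ring
    · rw [if_neg h]; ring
  have hE := hθ i j hij
  have key : (u j - u i) * D (θ i j)
      = D (r i j + ∑ k, r i k * v j k) + (u j - u i) * (u i + u j) * θ i j := by
    have h := congrArg D hE
    rw [D.leibniz, smul_eq_mul, smul_eq_mul, map_sub, hDu, hDu] at h
    linear_combination h
  have hA : algebraMap ℚ R (15 / 4) - algebraMap ℚ R (11 / 4) = 1 := by
    rw [← map_sub]; norm_num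
  have h2 : ∑ x : Fin N, ∑ l : Fin N, v i x * (v j l * v x l)
      + ∑ x : Fin N, ∑ l : Fin N, v j x * (v i l * v x l) = 0 := by
    have hc : ∑ x : Fin N, ∑ l : Fin N, v j x * (v i l * v x l)
        = ∑ x : Fin N, ∑ l : Fin N, v j l * (v i x * v l x) := Finset.sum_comm
    rw [hc]
    rw [← Finset.sum_add_distrib]
    refine Finset.sum_eq_zero fun x _ => ?_
    rw [← Finset.sum_add_distrib]
    refine Finset.sum_eq_zero fun l _ => ?_
    rw [hva l x]; ring
  have hsum : (∑ x : Fin N,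
        (r i x * ((u j - u x) * ∑ l : Fin N, v j l * v x l) +
          v j x * ((if i = x then (algebraMap ℚ R) (15 / 4) else 0)
            + (u i + u x) * r i x - ∑ k : Fin N, v i k * v x k)))
      = (u i - u j) * r i j * algebraMap ℚ R (15 / 4)
        + 2 * u i * ∑ x : Fin N, r i x * v j x
        + ∑ x : Fin N, v i x * v j x
        + (u j - u i) * ∑ x : Fin N, ∑ l : Fin N, r i x * v j l * v x l
        - (∑ x : Fin N, ∑ l : Fin N, v i x * (v j l * v x l)
            + ∑ x : Fin N, ∑ l : Fin N, v j x * (v i l * v x l)) := by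
    have e1 : ∀ x : Fin N,
        r i x * ((u j - u x) * ∑ l : Fin N, v j l * v x l) +
          v j x * ((if i = x then (algebraMap ℚ R) (15 / 4) else 0)
            + (u i + u x) * r i x - ∑ k : Fin N, v i k * v x k)
        = ((u j - u i) * (r i x * ∑ l : Fin N, v j l * v x l)
            - v i x * ∑ l : Fin N, v j l * v x l)
          + v j x * (if i = x then (algebraMap ℚ R) (15 / 4) else 0)
          + (2 * u i * (r i x * v j x) + v i x * v j x)
          - v j x * ∑ k : Fin N, v i k * v x k := by
      intro x
      linear_combination ((∑ l : Fin N, v j l * v x l) - v j x) * hv i x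
    rw [Finset.sum_congr rfl fun x _ => e1 x]
    rw [Finset.sum_sub_distrib, Finset.sum_add_distrib, Finset.sum_add_distrib,
      Finset.sum_sub_distrib, Finset.sum_add_distrib]
    have p1 : ∑ x : Fin N, (u j - u i) * (r i x * ∑ l : Fin N, v j l * v x l)
        = (u j - u i) * ∑ x : Fin N, ∑ l : Fin N, r i x * v j l * v x l := by
      rw [← Finset.mul_sum]
      congr 1
      refine Finset.sum_congr rfl fun x _ => ?_
      rw [Finset.mul_sum]
      exact Finset.sum_congr rfl fun l _ => by ring
    have p2 : ∑ x : Fin N, v i x * ∑ l : Fin N, v j l * v x l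
        = ∑ x : Fin N, ∑ l : Fin N, v i x * (v j l * v x l) := by
      exact Finset.sum_congr rfl fun x _ => by rw [Finset.mul_sum]
    have p3 : ∑ x : Fin N, v j x * (if i = x then (algebraMap ℚ R) (15 / 4) else 0)
        = (u i - u j) * r i j * algebraMap ℚ R (15 / 4) := by
      simp only [mul_ite, mul_zero, Finset.sum_ite_eq, Finset.mem_univ, if_true]
      rw [hv j i, hr j i]
    have p4 : ∑ x : Fin N, 2 * u i * (r i x * v j x)
        = 2 * u i * ∑ x : Fin N, r i x * v j x := by rw [← Finset.mul_sum]
    have p5 : ∑ x : Fin N, v j x * ∑ k : Fin N, v i k * v x k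
        = ∑ x : Fin N, ∑ l : Fin N, v j x * (v i l * v x l) := by
      exact Finset.sum_congr rfl fun x _ => by rw [Finset.mul_sum]
    rw [p1, p2, p3, p4, p5]
    ring
  refine hS.mul_left_cancel ?_
  rw [key, map_add, map_sum]
  simp only [Derivation.leibniz, smul_eq_mul, hDr, hDv, if_neg hij, zero_add]
  rw [hsum]
  linear_combination (-1 : R) * h2 + (-2 * u i) * hE + (-((u j - u i) * r i j)) * hA
end

section
/- Let R be a commutative ring, (u_i) with u_i − u_j invertible for i ≠ j, (r_{ij}) symmetric, v_{ij} := (u_j − u_i) r_{ij}, θ_{ij} := (u_j − u_i)^{-1}(r_{ij} + Σ_k r_{ik} v_{jk}) for i ≠ j. Then for every integer m ≥ 0 and all i ≠ j: u_j^{m+1} θ_{ij} + u_i^{m+1} θ_{ji} = r_{ij} Σ_{p=0}^{m} u_i^p u_j^{m−p} + Σ_k r_{ik} r_{jk} ( − u_i^{m+1} + (u_k − u_j) Σ_{p=0}^{m} u_i^p u_j^{m−p} ). -/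
/-- Companion identity: `u_j^{m+1} θ_{ij} + u_i^{m+1} θ_{ji}` has no poles. -/
theorem stmt12 {R : Type*} [CommRing R] {N : ℕ}
    (u : Fin N → R) (hinv : ∀ i j, i ≠ j → IsUnit (u i - u j))
    (r : Fin N → Fin N → R) (hr : ∀ i j, r i j = r j i)
    (v : Fin N → Fin N → R) (hv : ∀ i j, v i j = (u j - u i) * r i j)
    (θ : Fin N → Fin N → R)
    (hθ : ∀ i j, i ≠ j → (u j - u i) * θ i j = r i j + ∑ k, r i k * v j k) :
    ∀ (m : ℕ) (i j : Fin N), i ≠ j →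
      u j ^ (m + 1) * θ i j + u i ^ (m + 1) * θ j i
        = r i j * (∑ p ∈ Finset.range (m + 1), u i ^ p * u j ^ (m - p))
          + ∑ k, r i k * r j k *
              (-(u i ^ (m + 1)) + (u k - u j) * ∑ p ∈ Finset.range (m + 1), u i ^ p * u j ^ (m - p)) := by
  intro m i j hij
  apply (hinv j i hij.symm).mul_left_cancel
  have h1 := hθ i j hij
  have h2 := hθ j i hij.symm
  set S := ∑ p ∈ Finset.range (m + 1), u i ^ p * u j ^ (m - p) with hSdef
  have geo : (u j - u i) * S = u j ^ (m + 1) - u i ^ (m + 1) := by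
    have h := geom_sum₂_mul (u i) (u j) (m + 1)
    simp only [Nat.add_sub_cancel] at h
    linear_combination -h
  have hS : u j ^ (m + 1) * (∑ k, r i k * v j k) - u i ^ (m + 1) * (∑ k, r j k * v i k)
      = ∑ k, r i k * r j k *
          (u i ^ (m + 2) + u k * u j ^ (m + 1) - u j ^ (m + 2) - u k * u i ^ (m + 1)) := by
    rw [Finset.mul_sum, Finset.mul_sum, ← Finset.sum_sub_distrib]
    refine Finset.sum_congr rfl fun k _ => ?_
    rw [hv j k, hv i k, hr j k]
    ring
  have hS2 : (u j - u i) * ∑ k, r i k * r j k * (-(u i ^ (m + 1)) + (u k - u j) * S)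
      = ∑ k, r i k * r j k *
          (u i ^ (m + 2) + u k * u j ^ (m + 1) - u j ^ (m + 2) - u k * u i ^ (m + 1)) := by
    rw [Finset.mul_sum]
    refine Finset.sum_congr rfl fun k _ => ?_
    linear_combination (r i k * r j k * (u k - u j)) * geo
  linear_combination u j ^ (m + 1) * h1 - u i ^ (m + 1) * h2 + hS - hS2 - r i j * geo + u i ^ (m + 1) * hr i j
end
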